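/- Let H be a complex Hilbert space and let A, B be bounded linear operators on H. Then the operator norm of the block operator L = [[A, 0], [B, I]] acting on H × H satisfies ‖L‖ ≤ √(1 + ‖A*A + B*B‖). -/

import Mathlib

open ContinuousLinearMap

/-- For bounded operators `A, B` on a complex Hilbert space `H`, the block
operator `L = [[A, 0], [B, I]]` on the Hilbert direct sum `H ⊕ H` satisfies
`‖L‖ ≤ √(1 + ‖A*A + B*B‖)`. -/
theorem block_norm_sqrt_bound {H : Type*}
    [NormedAddCommGroup H] [InnerProductSpace ℂ H] [CompleteSpace H]
    (A B : H →L[ℂ] H)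
    (L : WithLp 2 (H × H) →L[ℂ] WithLp 2 (H × H))
    (hL : ∀ x y : H,
      L ((WithLp.equiv 2 (H × H)).symm (x, y)) =
        (WithLp.equiv 2 (H × H)).symm (A x, B x + y)) :
    ‖L‖ ≤ Real.sqrt (1 + ‖adjoint A ∘L A + adjoint B ∘L B‖) := by
  set c : ℝ := ‖adjoint A ∘L A + adjoint B ∘L B‖ with hc
  have hc0 : 0 ≤ c := norm_nonneg _
  apply opNorm_le_bound _ (Real.sqrt_nonneg _)
  intro z
  set x : H := z.fst
  set y : H := z.snd
  have hz : z = (WithLp.equiv 2 (H × H)).symm (x, y) := rfl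
  -- key : ‖A x‖^2 + ‖B x‖^2 ≤ c * ‖x‖^2
  have key : ‖A x‖ ^ 2 + ‖B x‖ ^ 2 ≤ c * ‖x‖ ^ 2 := by
    have h1 : (‖A x‖ : ℝ) ^ 2 + ‖B x‖ ^ 2 =
        RCLike.re (inner ℂ ((adjoint A ∘L A + adjoint B ∘L B) x) x : ℂ) := by
      simp only [ContinuousLinearMap.add_apply, ContinuousLinearMap.comp_apply,
        inner_add_left, adjoint_inner_left, map_add]
      rw [← inner_self_eq_norm_sq (𝕜 := ℂ), ← inner_self_eq_norm_sq (𝕜 := ℂ)]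
    rw [h1]
    calc RCLike.re (inner ℂ ((adjoint A ∘L A + adjoint B ∘L B) x) x : ℂ)
        ≤ ‖(inner ℂ ((adjoint A ∘L A + adjoint B ∘L B) x) x : ℂ)‖ :=
          RCLike.re_le_norm _
      _ ≤ ‖(adjoint A ∘L A + adjoint B ∘L B) x‖ * ‖x‖ := norm_inner_le_norm _ _
      _ ≤ (c * ‖x‖) * ‖x‖ := by
          gcongr
          exact le_opNorm _ _
      _ = c * ‖x‖ ^ 2 := by ring
  have hb : ‖B x‖ ≤ Real.sqrt c * ‖x‖ := by
    have h2 : ‖B x‖ ^ 2 ≤ c * ‖x‖ ^ 2 := by nlinarith [sq_nonneg ‖A x‖]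
    have := Real.sqrt_le_sqrt h2
    rwa [Real.sqrt_sq (norm_nonneg _), Real.sqrt_mul hc0, Real.sqrt_sq (norm_nonneg _)]
      at this
  have hLz : ‖L z‖ ^ 2 = ‖A x‖ ^ 2 + ‖B x + y‖ ^ 2 := by
    rw [hz, hL x y]
    have := WithLp.prod_norm_sq_eq_of_L2
      ((WithLp.equiv 2 (H × H)).symm (A x, B x + y))
    simpa using this
  have hzn : ‖z‖ ^ 2 = ‖x‖ ^ 2 + ‖y‖ ^ 2 := by
    have := WithLp.prod_norm_sq_eq_of_L2 z
    simpa using this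
  have hsq : ‖L z‖ ^ 2 ≤ (1 + c) * ‖z‖ ^ 2 := by
    rw [hLz, hzn]
    have hby : ‖B x + y‖ ≤ ‖B x‖ + ‖y‖ := norm_add_le _ _
    have hsc : Real.sqrt c ^ 2 = c := Real.sq_sqrt hc0
    nlinarith [sq_nonneg (‖x‖ - Real.sqrt c * ‖y‖), norm_nonneg (B x + y),
      norm_nonneg (B x), norm_nonneg y, norm_nonneg x, Real.sqrt_nonneg c]
  have : ‖L z‖ ≤ Real.sqrt ((1 + c) * ‖z‖ ^ 2) := by
    rw [← Real.sqrt_sq (norm_nonneg (L z))]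
    exact Real.sqrt_le_sqrt hsq
  calc ‖L z‖ ≤ Real.sqrt ((1 + c) * ‖z‖ ^ 2) := this
    _ = Real.sqrt (1 + c) * ‖z‖ := by
        rw [Real.sqrt_mul (by linarith), Real.sqrt_sq (norm_nonneg _)]
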